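/- Suppose G is connected and satisfies the curvature-dimension inequality CD(m,κ), and f : V → ℝ is a nonconstant harmonic eigenfunction of the Laplacian with nontrivial eigenvalue λ > 0, i.e., −Δf(x) = λ f(x) for all x ∈ V. Then for every vertex x ∈ V, |∇f|²(x) ≤ ((8 − 2/m)λ − 4κ) · max_{z ∈ V} f²(z). -/
import Mathlib


open Finset

/-- The weighted degree `d(x) = Σ_y w(x,y)`. -/
noncomputable def deg {V : Type*} [Fintype V] (w : V → V → ℝ) (x : V) : ℝ :=
  ∑ y, w x y

/-- The graph Laplacian `Δf(x) = (1/d(x)) Σ_y w(x,y) (f(y) − f(x))`. -/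
noncomputable def lap {V : Type*} [Fintype V] (w : V → V → ℝ) (f : V → ℝ) (x : V) : ℝ :=
  (1 / deg w x) * ∑ y, w x y * (f y - f x)

/-- The bilinear operator `Γ(f,g)(x) = (1/2)(Δ(fg)(x) − f(x)Δg(x) − g(x)Δf(x))`. -/
noncomputable def gam {V : Type*} [Fintype V] (w : V → V → ℝ) (f g : V → ℝ) (x : V) : ℝ :=
  (1 / 2) * (lap w (fun y => f y * g y) x - f x * lap w g x - g x * lap w f x)

/-- The curvature operator `Γ₂(f,g)(x) = (1/2)(ΔΓ(f,g)(x) − Γ(f,Δg)(x) − Γ(g,Δf)(x))`. -/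
noncomputable def gam2 {V : Type*} [Fintype V] (w : V → V → ℝ) (f g : V → ℝ) (x : V) : ℝ :=
  (1 / 2) * (lap w (gam w f g) x - gam w f (lap w g) x - gam w g (lap w f) x)

/-- The gradient square `|∇f|²(x) = (1/d(x)) Σ_y w(x,y) (f(x) − f(y))²`. -/
noncomputable def gradsq {V : Type*} [Fintype V] (w : V → V → ℝ) (f : V → ℝ) (x : V) : ℝ :=
  (1 / deg w x) * ∑ y, w x y * (f x - f y) ^ 2

/-- The curvature-dimension inequality `CD(m,κ)`. -/
def CD {V : Type*} [Fintype V] (w : V → V → ℝ) (m κ : ℝ) : Prop :=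
  ∀ (f : V → ℝ) (x : V), gam2 w f f x ≥ (1 / m) * (lap w f x) ^ 2 + κ * gam w f f x

section Helpers

variable {V : Type*} [Fintype V] (w : V → V → ℝ)

lemma lap_comb (g h : V → ℝ) (c : ℝ) (x : V) :
    lap w (fun y => g y + c * h y) x = lap w g x + c * lap w h x := by
  unfold lap
  have : ∑ y, w x y * ((g y + c * h y) - (g x + c * h x))
      = (∑ y, w x y * (g y - g x)) + c * ∑ y, w x y * (h y - h x) := by
    rw [Finset.mul_sum, ← Finset.sum_add_distrib]
    exact Finset.sum_congr rfl fun y _ => by ring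
  rw [this]; ring

lemma lap_smul (h : V → ℝ) (c : ℝ) (x : V) :
    lap w (fun y => c * h y) x = c * lap w h x := by
  unfold lap
  have : ∑ y, w x y * (c * h y - c * h x) = c * ∑ y, w x y * (h y - h x) := by
    rw [Finset.mul_sum]; exact Finset.sum_congr rfl fun y _ => by ring
  rw [this]; ring

lemma gam_self (f : V → ℝ) (x : V) : gam w f f x = (1/2) * gradsq w f x := by
  unfold gam gradsq lap
  have : ∑ y, w x y * (f x - f y) ^ 2
      = (∑ y, w x y * (f y * f y - f x * f x)) - 2 * f x * ∑ y, w x y * (f y - f x) := by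
    rw [Finset.mul_sum, ← Finset.sum_sub_distrib]
    exact Finset.sum_congr rfl fun y _ => by ring
  rw [this]; ring

lemma gam_smul (f h : V → ℝ) (c : ℝ) (x : V) :
    gam w f (fun y => c * h y) x = c * gam w f h x := by
  unfold gam
  rw [lap_smul]
  have : (fun y => f y * (c * h y)) = (fun y => c * (f y * h y)) := by
    funext y; ring
  rw [this, lap_smul]; ring

lemma sum_deg_lap (g : V → ℝ) (hsymm : ∀ x y, w x y = w y x) (hdeg : ∀ x, 0 < deg w x) :
    ∑ x, deg w x * lap w g x = 0 := by
  have h1 : ∀ x : V, deg w x * lap w g x = ∑ y, w x y * (g y - g x) := by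
    intro x
    unfold lap
    rw [← mul_assoc, mul_one_div, div_self (hdeg x).ne', one_mul]
  simp only [h1]
  have : ∑ x : V, ∑ y : V, w x y * (g y - g x)
      = (∑ x : V, ∑ y : V, w x y * g y) - ∑ x : V, ∑ y : V, w x y * g x := by
    rw [← Finset.sum_sub_distrib]
    exact Finset.sum_congr rfl fun x _ => by
      rw [← Finset.sum_sub_distrib]
      exact Finset.sum_congr rfl fun y _ => by ring
  rw [this, Finset.sum_comm]
  have : ∀ x y : V, w y x * g x = w x y * g x := fun x y => by rw [hsymm]
  simp only [this, sub_self]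

lemma lap_sq (f : V → ℝ) (x : V) :
    lap w (fun y => f y ^ 2) x = gradsq w f x + 2 * f x * lap w f x := by
  have h : (fun y => f y ^ 2) = (fun y => f y * f y) := by funext y; ring
  have h2 := gam_self w f x
  unfold gam at h2
  rw [h]; linarith

lemma gam2_eigen (f : V → ℝ) (lam : ℝ) (hf : ∀ y, lap w f y = -lam * f y) (x : V) :
    gam2 w f f x = (1/2) * lap w (gam w f f) x + lam * gam w f f x := by
  unfold gam2
  have h : lap w f = fun y => -lam * f y := funext hf
  rw [h, gam_smul w f f (-lam) x]
  ring

lemma gradsq_nonneg (hnonneg : ∀ x y, 0 ≤ w x y) (hdeg : ∀ x, 0 < deg w x)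
    (f : V → ℝ) (x : V) : 0 ≤ gradsq w f x := by
  unfold gradsq
  apply mul_nonneg (le_of_lt (by have := hdeg x; positivity))
  exact Finset.sum_nonneg fun y _ => mul_nonneg (hnonneg x y) (sq_nonneg _)

lemma lap_nonpos_at_max (hnonneg : ∀ x y, 0 ≤ w x y) (hdeg : ∀ x, 0 < deg w x)
    (F : V → ℝ) (x₀ : V) (hmax : ∀ y, F y ≤ F x₀) : lap w F x₀ ≤ 0 := by
  unfold lap
  apply mul_nonpos_of_nonneg_of_nonpos (le_of_lt (by have := hdeg x₀; positivity))
  apply Finset.sum_nonpos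
  intro y _
  exact mul_nonpos_of_nonneg_of_nonpos (hnonneg x₀ y) (by linarith [hmax y])

/-- Lichnerowicz-type bound: `CD(m,κ)` with a nonconstant eigenfunction of
eigenvalue `lam > 0` forces `κ ≤ lam - lam/m`. -/
lemma lichnerowicz (hsymm : ∀ x y, w x y = w y x) (hnonneg : ∀ x y, 0 ≤ w x y)
    (hdeg : ∀ x, 0 < deg w x) (m κ : ℝ) (hm : 0 < m) (hCD : CD w m κ)
    (lam : ℝ) (hlam : 0 < lam) (f : V → ℝ) (hf : ∀ y, lap w f y = -lam * f y)
    (hnc : ∃ a b, f a ≠ f b) : κ ≤ lam - lam / m := by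
  set S := ∑ z, deg w z * f z ^ 2 with hSdef
  have hS : 0 < S := by
    obtain ⟨a, b, hab⟩ := hnc
    have hz : ∃ z, f z ≠ 0 := by
      by_contra h
      push_neg at h
      exact hab (by rw [h a, h b])
    obtain ⟨z, hz⟩ := hz
    apply Finset.sum_pos'
    · exact fun i _ => mul_nonneg (hdeg i).le (sq_nonneg _)
    · exact ⟨z, Finset.mem_univ z, mul_pos (hdeg z) (by positivity)⟩
  -- ∑ deg * gam = lam * S
  have hgam : ∀ z : V, gam w f f z = (1/2) * lap w (fun y => f y * f y) z + lam * f z ^ 2 := by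
    intro z
    unfold gam
    rw [hf z]
    ring
  have h1 : ∑ z, deg w z * gam w f f z = lam * S := by
    have : ∀ z : V, deg w z * gam w f f z
        = (1/2) * (deg w z * lap w (fun y => f y * f y) z) + lam * (deg w z * f z ^ 2) := by
      intro z; rw [hgam z]; ring
    simp only [this]
    rw [Finset.sum_add_distrib, ← Finset.mul_sum, ← Finset.mul_sum,
      sum_deg_lap w _ hsymm hdeg]
    ring
  -- ∑ deg * gam2 = lam^2 * S
  have h2 : ∑ z, deg w z * gam2 w f f z = lam ^ 2 * S := by
    have : ∀ z : V, deg w z * gam2 w f f z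
        = (1/2) * (deg w z * lap w (gam w f f) z) + lam * (deg w z * gam w f f z) := by
      intro z; rw [gam2_eigen w f lam hf z]; ring
    simp only [this]
    rw [Finset.sum_add_distrib, ← Finset.mul_sum, ← Finset.mul_sum,
      sum_deg_lap w _ hsymm hdeg, h1]
    ring
  -- summed CD inequality
  have h3 : lam ^ 2 * S ≥ (1/m) * lam ^ 2 * S + κ * (lam * S) := by
    have hsum : ∑ z, deg w z * gam2 w f f z
        ≥ ∑ z, deg w z * ((1/m) * (lap w f z) ^ 2 + κ * gam w f f z) := by
      apply Finset.sum_le_sum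
      intro z _
      exact mul_le_mul_of_nonneg_left (hCD f z) (hdeg z).le
    have heq : ∑ z, deg w z * ((1/m) * (lap w f z) ^ 2 + κ * gam w f f z)
        = (1/m) * lam ^ 2 * S + κ * (lam * S) := by
      have : ∀ z : V, deg w z * ((1/m) * (lap w f z) ^ 2 + κ * gam w f f z)
          = (1/m) * lam ^ 2 * (deg w z * f z ^ 2) + κ * (deg w z * gam w f f z) := by
        intro z; rw [hf z]; ring
      simp only [this]
      rw [Finset.sum_add_distrib, ← Finset.mul_sum, ← Finset.mul_sum, h1]
    rw [h2, heq] at hsum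
    exact hsum
  have h4 : (lam - lam / m - κ) * (lam * S) ≥ 0 := by
    have : lam ^ 2 * S - ((1/m) * lam ^ 2 * S + κ * (lam * S))
        = (lam - lam / m - κ) * (lam * S) := by
      field_simp
      ring
    nlinarith [h3]
  have hlS : 0 < lam * S := mul_pos hlam hS
  nlinarith [h4, hlS]

end Helpers

theorem harnack_inequality {V : Type*} [Fintype V] (w : V → V → ℝ)
    (hsymm : ∀ x y, w x y = w y x) (hnonneg : ∀ x y, 0 ≤ w x y)
    (hloop : ∀ x, w x x = 0) (hdeg : ∀ x, 0 < deg w x)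
    (hconn : (SimpleGraph.fromRel fun x y => 0 < w x y).Connected)
    (m κ : ℝ) (hm : 0 < m) (hCD : CD w m κ)
    (lam : ℝ) (hlam : 0 < lam) (f : V → ℝ) (hf : ∀ x, -lap w f x = lam * f x)
    (hnc : ∃ x y, f x ≠ f y) (x : V) :
    gradsq w f x ≤ ((8 - 2 / m) * lam - 4 * κ) * ⨆ z, f z ^ 2 := by
  have hf' : ∀ y, lap w f y = -lam * f y := by
    intro y; have := hf y; linarith
  have hkap : κ ≤ lam - lam / m :=
    lichnerowicz w hsymm hnonneg hdeg m κ hm hCD lam hlam f hf' hnc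
  have hlm : 0 < lam / m := div_pos hlam hm
  obtain ⟨a, ha⟩ : ∃ a : ℝ, a = 4 * lam - lam / m - 3 * κ := ⟨_, rfl⟩
  have ha_lb : lam + 2 * (lam / m) ≤ a := by rw [ha]; linarith [hkap]
  have ha_pos : 0 < a := by linarith [hlam, hlm]
  set F : V → ℝ := fun z => gradsq w f z + a * f z ^ 2 with hF
  obtain ⟨x₀, _, hmax⟩ := Finset.exists_max_image Finset.univ F ⟨x, Finset.mem_univ x⟩
  have hmax' : ∀ y, F y ≤ F x₀ := fun y => hmax y (Finset.mem_univ y)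
  -- Laplacian of F at the max point is nonpositive
  have hlapF : lap w F x₀ ≤ 0 := lap_nonpos_at_max w hnonneg hdeg F x₀ hmax'
  -- decompose lap F
  have hdecomp : lap w F x₀ = lap w (gradsq w f) x₀ + a * gradsq w f x₀
      - 2 * lam * (a * f x₀ ^ 2) := by
    have h1 : lap w F x₀ = lap w (gradsq w f) x₀ + a * lap w (fun y => f y ^ 2) x₀ :=
      lap_comb w (gradsq w f) (fun y => f y ^ 2) a x₀
    rw [h1, lap_sq w f x₀, hf' x₀]
    ring
  -- lower bound for lap (gradsq) from CD
  have hgg : gradsq w f = fun z => 2 * gam w f f z := by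
    funext z; rw [gam_self w f z]; ring
  have hgrad_lb : lap w (gradsq w f) x₀
      ≥ (4 / m) * lam ^ 2 * f x₀ ^ 2 + (2 * κ - 2 * lam) * gradsq w f x₀ := by
    have h1 : lap w (gradsq w f) x₀ = 2 * lap w (gam w f f) x₀ := by
      rw [hgg]; exact lap_smul w (gam w f f) 2 x₀
    have h2 := gam2_eigen w f lam hf' x₀
    have h3 := hCD f x₀
    rw [hf' x₀] at h3
    have h4 := gam_self w f x₀
    have h6 : lap w (gam w f f) x₀ = 2 * gam2 w f f x₀ - 2 * lam * gam w f f x₀ := by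
      linarith [h2]
    rw [h1, h6, h4]
    have h5 : gam2 w f f x₀ ≥ (1/m) * (lam ^ 2 * f x₀ ^ 2) + κ * ((1/2) * gradsq w f x₀) := by
      calc gam2 w f f x₀ ≥ (1/m) * (-lam * f x₀) ^ 2 + κ * gam w f f x₀ := h3
        _ = (1/m) * (lam ^ 2 * f x₀ ^ 2) + κ * ((1/2) * gradsq w f x₀) := by rw [h4]; ring
    obtain ⟨nu, hnu⟩ : ∃ nu : ℝ, nu = 1 / m := ⟨_, rfl⟩
    have e1 : (4 : ℝ) / m * lam ^ 2 * f x₀ ^ 2 = 4 * (nu * (lam ^ 2 * f x₀ ^ 2)) := by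
      rw [hnu]; ring
    rw [e1]
    rw [← hnu] at h5
    linarith [h5]
  -- inequality at the max point
  have hG0 : 0 ≤ gradsq w f x₀ := gradsq_nonneg w hnonneg hdeg f x₀
  have hkey : (a + 2 * κ - 2 * lam) * gradsq w f x₀
      ≤ (2 * a * lam - (4 / m) * lam ^ 2) * f x₀ ^ 2 := by
    linarith [hlapF, hdecomp, hgrad_lb]
  -- sup bounds
  obtain ⟨M, hM⟩ : ∃ M : ℝ, M = ⨆ z, f z ^ 2 := ⟨_, rfl⟩
  have hbdd : BddAbove (Set.range fun z => f z ^ 2) := Set.Finite.bddAbove (Set.finite_range _)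
  have hMle : ∀ z, f z ^ 2 ≤ M := fun z => hM ▸ le_ciSup hbdd z
  have hM0 : f x₀ ^ 2 ≤ M := hMle x₀
  have hMnn : 0 ≤ M := le_trans (sq_nonneg _) hM0
  -- the positive factor t
  obtain ⟨t, ht⟩ : ∃ t : ℝ, t = 2 * lam - lam / m - κ := ⟨_, rfl⟩
  have ht_lb : lam ≤ t := by rw [ht]; linarith [hkap]
  have ht_pos : 0 < t := lt_of_lt_of_le hlam ht_lb
  have hteq : a + 2 * κ - 2 * lam = t := by rw [ha, ht]; ring
  rw [hteq] at hkey
  have hcoef : 0 ≤ 2 * a * lam - (4 / m) * lam ^ 2 := by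
    have h1 : (lam + 2 * (lam / m)) * lam ≤ a * lam :=
      mul_le_mul_of_nonneg_right ha_lb hlam.le
    have h2 : (lam + 2 * (lam / m)) * lam = lam ^ 2 + 2 * ((4/m) * lam ^ 2) / 4 := by ring
    nlinarith [h1, sq_nonneg lam]
  -- gradsq f x ≤ F x₀
  have hFx : gradsq w f x ≤ gradsq w f x₀ + a * f x₀ ^ 2 := by
    have h1 := hmax' x
    simp only [hF] at h1
    have h2 : 0 ≤ a * f x ^ 2 := mul_nonneg ha_pos.le (sq_nonneg _)
    linarith
  -- multiply by t and chain the inequalities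
  have hchain : t * gradsq w f x ≤ (2 * a * lam - (4 / m) * lam ^ 2 + t * a) * M := by
    have h1 : t * gradsq w f x ≤ t * (gradsq w f x₀ + a * f x₀ ^ 2) :=
      mul_le_mul_of_nonneg_left hFx ht_pos.le
    have h2 : t * (gradsq w f x₀ + a * f x₀ ^ 2)
        ≤ (2 * a * lam - (4 / m) * lam ^ 2) * f x₀ ^ 2 + t * a * f x₀ ^ 2 := by
      linarith [hkey]
    have hta : 0 ≤ t * a := (mul_pos ht_pos ha_pos).le
    have h3 : (2 * a * lam - (4 / m) * lam ^ 2) * f x₀ ^ 2 + t * a * f x₀ ^ 2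
        ≤ (2 * a * lam - (4 / m) * lam ^ 2 + t * a) * M := by
      have h4 : 0 ≤ M - f x₀ ^ 2 := by linarith
      have h5 : 0 ≤ (2 * a * lam - (4 / m) * lam ^ 2 + t * a) * (M - f x₀ ^ 2) :=
        mul_nonneg (by linarith) h4
      nlinarith [h5]
    linarith
  have hident : t * ((8 - 2 / m) * lam - 4 * κ)
      - (2 * a * lam - (4 / m) * lam ^ 2 + t * a) = (lam / m + κ) ^ 2 := by
    rw [ht, ha]; ring
  have hident' : (t * ((8 - 2 / m) * lam - 4 * κ)
      - (2 * a * lam - (4 / m) * lam ^ 2 + t * a)) * M = (lam / m + κ) ^ 2 * M := by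
    rw [hident]
  have hsqM : 0 ≤ (lam / m + κ) ^ 2 * M := mul_nonneg (sq_nonneg _) hMnn
  have hfinal : (2 * a * lam - (4 / m) * lam ^ 2 + t * a) * M
      ≤ t * (((8 - 2 / m) * lam - 4 * κ) * M) := by linarith [hident', hsqM]
  have hlast : t * gradsq w f x ≤ t * (((8 - 2 / m) * lam - 4 * κ) * M) :=
    le_trans hchain hfinal
  have hres : gradsq w f x ≤ ((8 - 2 / m) * lam - 4 * κ) * M :=
    le_of_mul_le_mul_left hlast ht_pos
  rw [hM] at hres
  exact hres
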